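/- Let β ∈ ℂ with Re(β) > 0, ε > 0, k ∈ ℕ, and R > exp^∘k(0) with M_{ε,k}(R) < Re(β). Let D ⊆ ℂ be an open set with Re(ζ) ≥ R for all ζ ∈ D, and let f : D → ℂ be holomorphic with f(D) ⊆ D and |f(ζ) − (ζ + β)| ≤ M_{ε,k}(Re(ζ)) for all ζ ∈ D. Then the sequence of functions φ_n(ζ) := f^∘n(ζ) − n·β converges uniformly on D to a holomorphic function φ : D → ℂ which satisfies φ(f(ζ)) = φ(ζ) + β for all ζ ∈ D. -/

import Mathlib

open Filter Set
open Topology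

/-- `M_{ε,k}(x) = (∏_{j=0}^{k-1} log^∘j(x))⁻¹ · (log^∘k(x))^{-(1+ε)}`. -/
noncomputable def Mfun (ε : ℝ) (k : ℕ) (x : ℝ) : ℝ :=
  (∏ j ∈ Finset.range k, Real.log^[j] x)⁻¹ * (Real.log^[k] x) ^ (-(1 + ε))

lemma expIter_nonneg (m : ℕ) : 0 ≤ Real.exp^[m] 0 := by
  cases m with
  | zero => simp
  | succ n => rw [Function.iterate_succ_apply']; exact (Real.exp_pos _).le

lemma expIter_pos (m : ℕ) (hm : 0 < m) : 0 < Real.exp^[m] 0 := by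
  obtain ⟨n, rfl⟩ := Nat.exists_eq_succ_of_ne_zero hm.ne'
  rw [Function.iterate_succ_apply']; exact Real.exp_pos _

lemma expIter_one_le (m : ℕ) (hm : 0 < m) : 1 ≤ Real.exp^[m] 0 := by
  obtain ⟨n, rfl⟩ := Nat.exists_eq_succ_of_ne_zero hm.ne'
  rw [Function.iterate_succ_apply']
  simpa using Real.exp_le_exp.mpr (expIter_nonneg n)

lemma logIter_gt {k : ℕ} {x : ℝ} (hx : Real.exp^[k] 0 < x) :
    ∀ j, j ≤ k → Real.exp^[k - j] 0 < Real.log^[j] x := by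
  intro j
  induction j with
  | zero => intro _; simpa using hx
  | succ n ih =>
    intro hn
    have hn' : n ≤ k := Nat.le_of_succ_le hn
    have IH := ih hn'
    have h1 : 0 < k - n := Nat.sub_pos_of_lt hn
    rw [Function.iterate_succ_apply']
    have hpos : 0 < Real.exp^[k - n] 0 := expIter_pos _ h1
    have : Real.log (Real.exp^[k - n] 0) < Real.log (Real.log^[n] x) :=
      Real.log_lt_log hpos IH
    have he : Real.exp^[k - n] 0 = Real.exp (Real.exp^[k - n - 1] 0) := by
      conv_lhs => rw [show k - n = (k - n - 1) + 1 by omega, Function.iterate_succ_apply']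
    rw [he, Real.log_exp, Nat.sub_sub] at this
    exact this

lemma logIter_pos {k : ℕ} {x : ℝ} (hx : Real.exp^[k] 0 < x) {j : ℕ} (hj : j ≤ k) :
    0 < Real.log^[j] x :=
  lt_of_le_of_lt (expIter_nonneg _) (logIter_gt hx j hj)

lemma logIter_mono {k : ℕ} {x y : ℝ} (hx : Real.exp^[k] 0 < x) (hxy : x ≤ y) :
    ∀ j, j ≤ k → Real.log^[j] x ≤ Real.log^[j] y := by
  intro j
  induction j with
  | zero => intro _; simpa using hxy
  | succ n ih =>
    intro hn
    have hn' : n ≤ k := Nat.le_of_succ_le hn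
    rw [Function.iterate_succ_apply', Function.iterate_succ_apply']
    exact Real.log_le_log (logIter_pos hx hn') (ih hn')

lemma Mfun_pos {ε : ℝ} {k : ℕ} {x : ℝ} (hx : Real.exp^[k] 0 < x) : 0 < Mfun ε k x := by
  unfold Mfun
  apply mul_pos
  · apply inv_pos.mpr
    exact Finset.prod_pos fun j hj => logIter_pos hx (Finset.mem_range.mp hj).le
  · exact Real.rpow_pos_of_pos (logIter_pos hx le_rfl) _

lemma Mfun_anti {ε : ℝ} (hε : 0 < ε) {k : ℕ} {x y : ℝ} (hx : Real.exp^[k] 0 < x)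
    (hxy : x ≤ y) : Mfun ε k y ≤ Mfun ε k x := by
  have hy : Real.exp^[k] 0 < y := lt_of_lt_of_le hx hxy
  unfold Mfun
  apply mul_le_mul
  · apply inv_anti₀
    · exact Finset.prod_pos fun j hj => logIter_pos hx (Finset.mem_range.mp hj).le
    · exact Finset.prod_le_prod (fun j hj => (logIter_pos hx (Finset.mem_range.mp hj).le).le)
        (fun j hj => logIter_mono hx hxy j (Finset.mem_range.mp hj).le)
  · apply Real.rpow_le_rpow_of_nonpos (logIter_pos hx le_rfl)
      (logIter_mono hx hxy k le_rfl)
    linarith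
  · exact (Real.rpow_pos_of_pos (logIter_pos hy le_rfl) _).le
  · exact (inv_pos.mpr (Finset.prod_pos fun j hj => logIter_pos hx (Finset.mem_range.mp hj).le)).le


lemma hasDerivAt_logIter (k : ℕ) (x : ℝ) (hx : Real.exp^[k] 0 < x) :
    HasDerivAt (Real.log^[k]) (∏ j ∈ Finset.range k, (Real.log^[j] x)⁻¹) x := by
  induction k with
  | zero => simpa using hasDerivAt_id x
  | succ n ih =>
    have hmono : StrictMono (Real.exp^[n]) := Real.exp_strictMono.iterate n
    have hx' : Real.exp^[n] 0 < x := by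
      calc Real.exp^[n] 0 ≤ Real.exp^[n] 1 := (hmono.monotone (by norm_num))
        _ = Real.exp^[n+1] 0 := by rw [Function.iterate_succ_apply, Real.exp_zero]
        _ < x := hx
    have IH := ih hx'
    have hpos : 0 < Real.log^[n] x := logIter_pos hx' le_rfl
    have hlog : HasDerivAt Real.log (Real.log^[n] x)⁻¹ (Real.log^[n] x) :=
      Real.hasDerivAt_log hpos.ne'
    have := hlog.comp x IH
    rw [← Function.iterate_succ' Real.log n] at this
    have heq : (Real.log^[n] x)⁻¹ * ∏ j ∈ Finset.range n, (Real.log^[j] x)⁻¹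
        = ∏ j ∈ Finset.range (n+1), (Real.log^[j] x)⁻¹ := by
      rw [Finset.prod_range_succ, mul_comm]
    rw [heq] at this
    exact this

noncomputable def Faux (ε : ℝ) (k : ℕ) (y : ℝ) : ℝ := -(ε⁻¹ * (Real.log^[k] y) ^ (-ε))

lemma hasDerivAt_F {ε : ℝ} (hε : 0 < ε) (k : ℕ) (x : ℝ) (hx : Real.exp^[k] 0 < x) :
    HasDerivAt (Faux ε k) (Mfun ε k x) x := by
  unfold Faux
  have hpos : 0 < Real.log^[k] x := logIter_pos hx le_rfl
  have h1 : HasDerivAt (fun y : ℝ => y ^ (-ε)) (-ε * (Real.log^[k] x) ^ (-ε - 1))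
      (Real.log^[k] x) := Real.hasDerivAt_rpow_const (Or.inl hpos.ne')
  have h2 : HasDerivAt (fun y => -(ε⁻¹ * (Real.log^[k] y) ^ (-ε)))
      (-(ε⁻¹ * (-ε * (Real.log^[k] x) ^ (-ε - 1) * ∏ j ∈ Finset.range k, (Real.log^[j] x)⁻¹))) x :=
    (h1.comp x (hasDerivAt_logIter k x hx)).const_mul ε⁻¹ |>.neg
  convert h2 using 1
  rw [Mfun, Finset.prod_inv_distrib, show -(1+ε) = -ε - 1 by ring]
  have hε' : ε ≠ 0 := hε.ne'
  have hkey : ∀ X P : ℝ, -(ε⁻¹ * (-ε * X * P)) = (ε⁻¹ * ε) * (X * P) := fun X P => by ring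
  rw [eq_comm, hkey, inv_mul_cancel₀ hε', one_mul, mul_comm]

lemma Mfun_summable {ε : ℝ} (hε : 0 < ε) (k : ℕ) {R : ℝ} (hR : Real.exp^[k] 0 < R)
    {c : ℝ} (hc : 0 < c) : Summable (fun n : ℕ => Mfun ε k (R + n * c)) := by
  set a : ℕ → ℝ := fun n => R + n * c with ha
  have haR : ∀ n : ℕ, R ≤ a n := by
    intro n; simp only [ha]; nlinarith [Nat.cast_nonneg (α := ℝ) n]
  have haE : ∀ n : ℕ, Real.exp^[k] 0 < a n := fun n => lt_of_lt_of_le hR (haR n)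
  have hstep : ∀ n : ℕ, c * Mfun ε k (a (n+1)) ≤ Faux ε k (a (n+1)) - Faux ε k (a n) := by
    intro n
    have hlt : a n < a (n+1) := by simp only [ha]; push_cast; nlinarith
    have hcont : ContinuousOn (Faux ε k) (Icc (a n) (a (n+1))) := by
      intro y hy
      have : Real.exp^[k] 0 < y := lt_of_lt_of_le (haE n) hy.1
      exact (hasDerivAt_F hε k y this).continuousAt.continuousWithinAt
    have hderiv : ∀ y ∈ Ioo (a n) (a (n+1)), HasDerivAt (Faux ε k) (Mfun ε k y) y := by
      intro y hy
      exact hasDerivAt_F hε k y (lt_trans (haE n) hy.1)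
    obtain ⟨ξ, hξ, hslope⟩ := exists_hasDerivAt_eq_slope (Faux ε k) (fun y => Mfun ε k y) hlt hcont hderiv
    have : Faux ε k (a (n+1)) - Faux ε k (a n) = Mfun ε k ξ * (a (n+1) - a n) := by
      have hne : a (n+1) - a n ≠ 0 := by linarith
      have := (div_eq_iff hne).mp hslope.symm
      linarith
    rw [this]
    have h2 : Mfun ε k (a (n+1)) ≤ Mfun ε k ξ :=
      Mfun_anti hε (lt_trans (haE n) hξ.1) hξ.2.le
    have h3 : a (n+1) - a n = c := by simp only [ha]; push_cast; ring
    rw [h3]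
    nlinarith
  have hbound : ∀ n : ℕ, ∑ i ∈ Finset.range n, Mfun ε k (a (i+1)) ≤ ε⁻¹ * (Real.log^[k] R) ^ (-ε) / c := by
    intro n
    have htel : ∑ i ∈ Finset.range n, (Faux ε k (a (i+1)) - Faux ε k (a i)) = Faux ε k (a n) - Faux ε k (a 0) :=
      Finset.sum_range_sub (fun i => Faux ε k (a i)) n
    have hFle : Faux ε k (a n) ≤ 0 := by
      have : 0 < (Real.log^[k] (a n)) ^ (-ε) := Real.rpow_pos_of_pos (logIter_pos (haE n) le_rfl) _
      simp only [Faux]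
      nlinarith [inv_pos.mpr hε]
    have ha0 : a 0 = R := by simp [ha]
    have h1 : ∑ i ∈ Finset.range n, c * Mfun ε k (a (i+1)) ≤ Faux ε k (a n) - Faux ε k (a 0) := by
      rw [← htel]; exact Finset.sum_le_sum fun i _ => hstep i
    rw [← Finset.mul_sum] at h1
    have h2 : Faux ε k (a n) - Faux ε k (a 0) ≤ ε⁻¹ * (Real.log^[k] R) ^ (-ε) := by
      rw [ha0]; simp only [Faux]; simp only [Faux] at hFle; linarith
    rw [le_div_iff₀ hc]
    calc (∑ i ∈ Finset.range n, Mfun ε k (a (i+1))) * c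
        = c * ∑ i ∈ Finset.range n, Mfun ε k (a (i+1)) := by ring
      _ ≤ Faux ε k (a n) - Faux ε k (a 0) := h1
      _ ≤ _ := h2
  have hsum1 : Summable (fun n : ℕ => Mfun ε k (a (n+1))) :=
    summable_of_sum_range_le (fun n => (Mfun_pos (haE (n+1))).le) hbound
  exact (summable_nat_add_iff 1).mp hsum1


theorem koenigs_sequence_converges_uniformly
    (β : ℂ) (hβ : 0 < β.re) (ε : ℝ) (hε : 0 < ε) (k : ℕ)
    (R : ℝ) (hR : Real.exp^[k] 0 < R) (hMR : Mfun ε k R < β.re)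
    (D : Set ℂ) (hD : IsOpen D) (hDre : ∀ ζ ∈ D, R ≤ ζ.re)
    (f : ℂ → ℂ) (hf : DifferentiableOn ℂ f D) (hinv : Set.MapsTo f D D)
    (hbound : ∀ ζ ∈ D, ‖f ζ - (ζ + β)‖ ≤ Mfun ε k ζ.re) :
    ∃ φ : ℂ → ℂ,
      TendstoUniformlyOn (fun (n : ℕ) (ζ : ℂ) => f^[n] ζ - (n : ℂ) * β) φ atTop D ∧
      DifferentiableOn ℂ φ D ∧
      ∀ ζ ∈ D, φ (f ζ) = φ ζ + β := by
  set c : ℝ := β.re - Mfun ε k R with hcdef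
  have hc0 : 0 < c := by simp only [hcdef]; linarith
  have hstep : ∀ ζ ∈ D, ζ.re + c ≤ (f ζ).re := by
    intro ζ hζ
    have hb := hbound ζ hζ
    have hM : Mfun ε k ζ.re ≤ Mfun ε k R := Mfun_anti hε hR (hDre ζ hζ)
    have habs : |(f ζ - (ζ + β)).re| ≤ ‖f ζ - (ζ + β)‖ := Complex.abs_re_le_norm _
    have h1 : -(Mfun ε k ζ.re) ≤ (f ζ).re - (ζ.re + β.re) := by
      have h2 : (f ζ - (ζ + β)).re = (f ζ).re - (ζ.re + β.re) := by
        simp [Complex.sub_re, Complex.add_re]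
      rw [h2] at habs
      have := neg_abs_le ((f ζ).re - (ζ.re + β.re))
      linarith
    simp only [hcdef]; linarith
  have hiter : ∀ n : ℕ, Set.MapsTo (f^[n]) D D := fun n => hinv.iterate n
  have hre : ∀ n : ℕ, ∀ ζ ∈ D, R + n * c ≤ (f^[n] ζ).re := by
    intro n
    induction n with
    | zero => intro ζ hζ; simpa using hDre ζ hζ
    | succ m ih =>
      intro ζ hζ
      have h1 := ih ζ hζ
      have h2 := hstep _ (hiter m hζ)
      rw [Function.iterate_succ_apply']
      push_cast
      linarith
  have hRnc : ∀ n : ℕ, Real.exp^[k] 0 < R + n * c := by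
    intro n
    have : (0:ℝ) ≤ n * c := by positivity
    linarith
  set g : ℕ → ℂ → ℂ := fun n ζ => f^[n+1] ζ - f^[n] ζ - β with hgdef
  have hgbound : ∀ (n : ℕ) (ζ : ℂ), ζ ∈ D → ‖g n ζ‖ ≤ Mfun ε k (R + n * c) := by
    intro n ζ hζ
    have hmem : f^[n] ζ ∈ D := hiter n hζ
    have hb := hbound _ hmem
    have h2 : Mfun ε k ((f^[n] ζ).re) ≤ Mfun ε k (R + n * c) :=
      Mfun_anti hε (hRnc n) (hre n ζ hζ)
    have h3 : g n ζ = f (f^[n] ζ) - (f^[n] ζ + β) := by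
      simp only [hgdef, Function.iterate_succ_apply']; ring
    rw [h3]
    exact le_trans hb h2
  have hu : Summable (fun n : ℕ => Mfun ε k (R + n * c)) := Mfun_summable hε k hR hc0
  have hS : TendstoUniformlyOn (fun (N : ℕ) (ζ : ℂ) => ∑ n ∈ Finset.range N, g n ζ)
      (fun ζ => ∑' n, g n ζ) atTop D :=
    tendstoUniformlyOn_tsum_nat hu hgbound
  set φ : ℂ → ℂ := fun ζ => ζ + ∑' n, g n ζ with hφdef
  have hid : TendstoUniformlyOn (fun (_ : ℕ) (ζ : ℂ) => ζ) (fun ζ => ζ) atTop D := by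
    intro u hu'
    filter_upwards with n ζ hζ using refl_mem_uniformity hu'
  have hTU0 : TendstoUniformlyOn (fun (N : ℕ) (ζ : ℂ) => ζ + ∑ n ∈ Finset.range N, g n ζ)
      φ atTop D := hid.add hS
  have heq : ∀ (N : ℕ) (ζ : ℂ), ζ + ∑ n ∈ Finset.range N, g n ζ = f^[N] ζ - (N : ℂ) * β := by
    intro N ζ
    induction N with
    | zero => simp
    | succ m ih =>
      rw [Finset.sum_range_succ, ← add_assoc, ih]
      simp only [hgdef]
      push_cast
      ring
  have hTU : TendstoUniformlyOn (fun (n : ℕ) (ζ : ℂ) => f^[n] ζ - (n : ℂ) * β) φ atTop D := by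
    apply hTU0.congr
    filter_upwards with N ζ hζ using heq N ζ
  have hdiffn : ∀ n : ℕ, DifferentiableOn ℂ (f^[n]) D := by
    intro n
    induction n with
    | zero => simpa using differentiableOn_id
    | succ m ih =>
      rw [Function.iterate_succ']
      exact hf.comp ih (hiter m)
  refine ⟨φ, hTU, ?_, ?_⟩
  · apply hTU.tendstoLocallyUniformlyOn.differentiableOn ?_ hD
    filter_upwards with n
    exact (hdiffn n).sub (differentiableOn_const _)
  · intro ζ hζ
    have h1 : Tendsto (fun n : ℕ => f^[n] (f ζ) - (n : ℂ) * β) atTop (𝓝 (φ (f ζ))) :=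
      hTU.tendsto_at (hinv hζ)
    have h2 : Tendsto (fun n : ℕ => f^[n] ζ - (n : ℂ) * β) atTop (𝓝 (φ ζ)) :=
      hTU.tendsto_at hζ
    have h3 : Tendsto (fun n : ℕ => f^[n+1] ζ - ((n+1 : ℕ) : ℂ) * β) atTop (𝓝 (φ ζ)) :=
      h2.comp (tendsto_add_atTop_nat 1)
    have h4 : Tendsto (fun n : ℕ => f^[n] (f ζ) - (n : ℂ) * β) atTop (𝓝 (φ ζ + β)) := by
      have hfun : (fun n : ℕ => f^[n] (f ζ) - (n : ℂ) * β)
          = fun n : ℕ => (f^[n+1] ζ - ((n+1 : ℕ) : ℂ) * β) + β := by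
        funext n
        rw [← Function.iterate_succ_apply]
        push_cast
        ring
      rw [hfun]
      exact h3.add tendsto_const_nhds
    exact tendsto_nhds_unique h1 h4
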